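/- If n ≡ 3 (mod 9), then in ℤ[ζ] (ζ a primitive cube root of unity) the element A_n/3 = n/3 + 1 + ζ is divisible by (1-ζ) but not by (1-ζ)^2. -/

import Mathlib

open Polynomial

noncomputable def ψ : AdjoinRoot (X ^ 2 + X + 1 : ℤ[X]) →+* DualNumber (ZMod 3) :=
  AdjoinRoot.lift (Int.castRingHom _) (1 + DualNumber.eps) (by
    simp only [eval₂_add, eval₂_pow, eval₂_X, eval₂_one]
    have h2 : (DualNumber.eps : DualNumber (ZMod 3)) * DualNumber.eps = 0 :=
      DualNumber.eps_mul_eps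
    have h3 : (3 : DualNumber (ZMod 3)) = 0 := by
      refine TrivSqZeroExt.ext ?_ ?_ <;> simp <;> decide
    linear_combination h2 + h3 + DualNumber.eps * h3)

lemma ψ_root : ψ (AdjoinRoot.root (X ^ 2 + X + 1 : ℤ[X])) = 1 + DualNumber.eps :=
  AdjoinRoot.lift_root _

set_option synthInstance.maxHeartbeats 400000 in
set_option maxHeartbeats 1000000 in
theorem An_div_three_valuation (n : ℤ) (hn : n ≡ 3 [ZMOD 9]) :
    letI R := AdjoinRoot (X ^ 2 + X + 1 : ℤ[X])
    letI ζ : R := AdjoinRoot.root _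
    ((1 - ζ) ∣ ((n / 3 : ℤ) : R) + 1 + ζ) ∧ ¬ ((1 - ζ) ^ 2 ∣ ((n / 3 : ℤ) : R) + 1 + ζ) := by
  set R := AdjoinRoot (X ^ 2 + X + 1 : ℤ[X])
  set ζ : R := AdjoinRoot.root _ with hζdef
  have hmod : n % 9 = 3 % 9 := hn
  obtain ⟨k, hk⟩ : ∃ k : ℤ, n = 9 * k + 3 := ⟨(n - 3) / 9, by omega⟩
  have hdiv3 : (n / 3 : ℤ) = 3 * k + 1 := by omega
  have hζ : ζ ^ 2 + ζ + 1 = 0 := by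
    have := AdjoinRoot.eval₂_root (X ^ 2 + X + 1 : ℤ[X])
    simpa using this
  have hx : ((n / 3 : ℤ) : R) + 1 + ζ = ((3 * k + 1 : ℤ) : R) + 1 + ζ := by rw [hdiv3]
  constructor
  · refine ⟨((2 * k + 1 : ℤ) : R) + ((k + 1 : ℤ) : R) * ζ, ?_⟩
    rw [hx]
    push_cast
    linear_combination ((k : R) + 1) * hζ + (Int.cast_mul 3 k : ((3*k:ℤ):R) = _) - (Int.cast_mul 2 k : ((2*k:ℤ):R) = _) + ((k:R)*ζ-1) * (Int.cast_ofNat 2 : ((2:ℤ):R) = 2) - (k:R) * (Int.cast_ofNat 3 : ((3:ℤ):R) = 3) + ζ * (Int.cast_mul 2 k : ((2*k:ℤ):R) = _) + ζ * (k:R) * (Int.cast_ofNat 2 : ((2:ℤ):R) = 2)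
  · rintro ⟨u, hu⟩
    have h0 : ψ (((n / 3 : ℤ) : R) + 1 + ζ) = DualNumber.eps := by
      rw [hx, map_add, map_add, map_one, map_intCast, ψ_root]
      push_cast
      have h3 : ((3 : ℤ) : DualNumber (ZMod 3)) = 0 := by
        refine TrivSqZeroExt.ext ?_ ?_ <;> simp <;> decide
      linear_combination (k : DualNumber (ZMod 3)) * h3 + h3
    have h1 : ψ ((1 - ζ) ^ 2 * u) = 0 := by
      have hpsi : ψ (1 - ζ) = -DualNumber.eps := by
        rw [map_sub, map_one, ψ_root]; ring
      rw [map_mul, map_pow, hpsi, sq, neg_mul_neg, DualNumber.eps_mul_eps, zero_mul]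
    rw [hu, h1] at h0
    have h2 : (1 : ZMod 3) = 0 := by
      have h4 := congrArg TrivSqZeroExt.snd h0
      rwa [TrivSqZeroExt.snd_zero, DualNumber.snd_eps, eq_comm] at h4
    exact one_ne_zero h2
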